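/- Let X_1,...,X_n be independent Bernoulli random variables with E[X_i] ≤ r for all i, where 0 < r < 1. For each i let w_i : {0,1}^{i-1} → [0,1] be a function such that for every (x_1,...,x_n) ∈ {0,1}^n we have ∑_{i=1}^n w_i(x_1,...,x_{i-1}) = μ/r. Then for every δ > 0, P(∑_{i=1}^n w_i(X_1,...,X_{i-1}) X_i ≥ (1+δ)μ) ≤ (e^δ / (1+δ)^{1+δ})^μ. -/

import Mathlib

open MeasureTheory ProbabilityTheory

theorem stmt1 {Ω : Type*} [MeasurableSpace Ω] (μ : Measure Ω) [IsProbabilityMeasure μ]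
    (n : ℕ) (X : Fin n → Ω → ℝ) (r : ℝ) (hr0 : 0 < r) (hr1 : r < 1)
    (h01 : ∀ i ω, X i ω = 0 ∨ X i ω = 1)
    (hmeas : ∀ i, Measurable (X i))
    (hind : iIndepFun X μ)
    (hE : ∀ i, ∫ ω, X i ω ∂μ ≤ r)
    (w : Fin n → (Fin n → ℝ) → ℝ)
    (hw01 : ∀ i x, w i x ∈ Set.Icc (0 : ℝ) 1)
    (hprefix : ∀ i : Fin n, ∀ x y : Fin n → ℝ,
      (∀ j : Fin n, (j : ℕ) < (i : ℕ) → x j = y j) → w i x = w i y)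
    (μ₀ : ℝ) (hμ₀ : 0 < μ₀)
    (hsum : ∀ x : Fin n → ℝ, (∀ j, x j = 0 ∨ x j = 1) → ∑ i, w i x = μ₀ / r)
    (δ : ℝ) (hδ : 0 < δ) :
    μ {ω | (1 + δ) * μ₀ ≤ ∑ i, w i (fun j => X j ω) * X i ω} ≤
      ENNReal.ofReal ((Real.exp δ / (1 + δ) ^ (1 + δ)) ^ μ₀) := by
  classical
  have h1δ : (0:ℝ) < 1 + δ := by linarith
  set t : ℝ := Real.log (1 + δ) with ht_def
  have hexp_t : Real.exp t = 1 + δ := Real.exp_log h1δ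
  have ht0 : 0 < t := Real.log_pos (by linarith)
  -- Boolean encoding of the random variables
  set V : Ω → Fin n → Bool := fun ω j => decide (X j ω = 1) with hV_def
  set b : (Fin n → Bool) → (Fin n → ℝ) := fun v j => if v j then 1 else 0 with hb_def
  have hXV : ∀ ω j, X j ω = b (V ω) j := by
    intro ω j
    rcases h01 j ω with h | h <;> simp [hV_def, hb_def, h]
  have hb01 : ∀ (v : Fin n → Bool) (j : Fin n), b v j = 0 ∨ b v j = 1 := by
    intro v j; by_cases h : v j <;> simp [hb_def, h]
  have hVmeas : Measurable V := by
    refine measurable_pi_lambda _ fun j => ?_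
    have h : Measurable fun x : ℝ => decide (x = 1) := by
      refine measurable_to_countable' fun y => ?_
      cases y
      · convert (MeasurableSet.singleton (1:ℝ)).compl using 1
        ext x; simp
      · convert MeasurableSet.singleton (1:ℝ) using 1
        ext x; simp
    exact h.comp (hmeas j)
  have hGmeas : ∀ g : (Fin n → Bool) → ℝ, Measurable fun ω => g (V ω) :=
    fun g => (measurable_of_countable g).comp hVmeas
  have hGint : ∀ g : (Fin n → Bool) → ℝ, Integrable (fun ω => g (V ω)) μ := by
    intro g
    have hne : (Finset.univ : Finset (Fin n → Bool)).Nonempty := Finset.univ_nonempty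
    exact ⟨(hGmeas g).aestronglyMeasurable, HasFiniteIntegral.of_bounded
      (C := Finset.univ.sup' hne fun v => ‖g v‖)
      (ae_of_all _ fun ω => Finset.le_sup' (fun v => ‖g v‖) (Finset.mem_univ (V ω)))⟩
  have hXint : ∀ i, Integrable (X i) μ := fun i =>
    ⟨(hmeas i).aestronglyMeasurable, HasFiniteIntegral.of_bounded (C := 1)
      (ae_of_all _ fun ω => by rcases h01 i ω with h | h <;> simp [h])⟩
  -- key independence computation
  have key : ∀ (k : ℕ) (hk : k < n) (g : (Fin n → Bool) → ℝ),
      (∀ v v' : Fin n → Bool, (∀ j : Fin n, (j:ℕ) < k → v j = v' j) → g v = g v') →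
      ∫ ω, g (V ω) * X ⟨k, hk⟩ ω ∂μ = (∫ ω, g (V ω) ∂μ) * ∫ ω, X ⟨k, hk⟩ ω ∂μ := by
    intro k hk g hg
    set K : Fin n := ⟨k, hk⟩ with hK_def
    set S : Finset (Fin n) := Finset.univ.filter (fun j => (j:ℕ) < k) with hS_def
    have hdisj : Disjoint S {K} := by
      simp only [Finset.disjoint_singleton_right, hS_def, Finset.mem_filter, Finset.mem_univ,
        true_and, hK_def]
      omega
    have hIF := hind.indepFun_finset S {K} hdisj hmeas
    set φ : ((i : S) → ℝ) → ℝ :=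
      fun u => g fun j => if h : j ∈ S then decide (u ⟨j, h⟩ = 1) else false with hφ_def
    set ψ : ((i : ({K} : Finset (Fin n))) → ℝ) → ℝ :=
      fun u => u ⟨K, Finset.mem_singleton_self K⟩ with hψ_def
    have hdec : Measurable fun x : ℝ => decide (x = 1) := by
      refine measurable_to_countable' fun y => ?_
      cases y
      · convert (MeasurableSet.singleton (1:ℝ)).compl using 1
        ext x; simp
      · convert MeasurableSet.singleton (1:ℝ) using 1
        ext x; simp
    have hφm : Measurable φ := by
      refine (measurable_of_countable g).comp ?_
      refine measurable_pi_lambda _ fun j => ?_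
      by_cases h : j ∈ S
      · simp only [h, dif_pos]
        exact hdec.comp (measurable_pi_apply _)
      · simp only [h, dif_neg, not_false_iff]
        exact measurable_const
    have hψm : Measurable ψ := measurable_pi_apply _
    have hcomp := hIF.comp hφm hψm
    have e1 : (φ ∘ fun ω (i : S) => X i ω) = fun ω => g (V ω) := by
      funext ω
      refine hg _ _ fun j hj => ?_
      have hjS : j ∈ S := by simp [hS_def, hj]
      simp [hφ_def, hjS, hV_def]
    have e2 : (ψ ∘ fun ω (i : ({K} : Finset (Fin n))) => X i ω) = X K := rfl
    rw [e1, e2] at hcomp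
    exact IndepFun.integral_mul_eq_mul_integral hcomp (hGint g).aestronglyMeasurable (hXint K).aestronglyMeasurable
  -- the weight functions, through the boolean encoding
  set W : Fin n → (Fin n → Bool) → ℝ := fun i v => w i (b v) with hW_def
  have hWdep : ∀ (i : Fin n) (v v' : Fin n → Bool),
      (∀ j : Fin n, (j:ℕ) < (i:ℕ) → v j = v' j) → W i v = W i v' := by
    intro i v v' h
    exact hprefix i (b v) (b v') fun j hj => by simp [hb_def, h j hj]
  have hW01 : ∀ i v, W i v ∈ Set.Icc (0:ℝ) 1 := fun i v => hw01 i (b v)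
  -- the exponential supermartingale
  set G : ℕ → (Fin n → Bool) → ℝ := fun k v =>
    Real.exp (t * ∑ i ∈ Finset.univ.filter (fun i : Fin n => (i:ℕ) < k),
        W i v * (if v i then 1 else 0)
      + (Real.exp t - 1) * (μ₀ - r * ∑ i ∈ Finset.univ.filter (fun i : Fin n => (i:ℕ) < k), W i v))
    with hG_def
  have hGdep : ∀ (k : ℕ) (v v' : Fin n → Bool),
      (∀ j : Fin n, (j:ℕ) < k → v j = v' j) → G k v = G k v' := by
    intro k v v' h
    have h1 : ∀ i ∈ Finset.univ.filter (fun i : Fin n => (i:ℕ) < k),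
        W i v * (if v i then (1:ℝ) else 0) = W i v' * (if v' i then 1 else 0) := by
      intro i hi
      have hik : (i:ℕ) < k := (Finset.mem_filter.mp hi).2
      rw [hWdep i v v' fun j hj => h j (hj.trans hik), h i hik]
    have h2 : ∀ i ∈ Finset.univ.filter (fun i : Fin n => (i:ℕ) < k), W i v = W i v' := by
      intro i hi
      have hik : (i:ℕ) < k := (Finset.mem_filter.mp hi).2
      exact hWdep i v v' fun j hj => h j (hj.trans hik)
    simp only [hG_def]
    rw [Finset.sum_congr rfl h1, Finset.sum_congr rfl h2]
  -- main induction
  have main : ∀ k, k ≤ n → ∫ ω, G k (V ω) ∂μ ≤ Real.exp ((Real.exp t - 1) * μ₀) := by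
    intro k
    induction k with
    | zero =>
      intro _
      have hc : G 0 = fun _ => Real.exp ((Real.exp t - 1) * μ₀) := by
        funext v; simp [hG_def]
      rw [hc]
      simp
    | succ k ih =>
      intro hk1
      have hk : k < n := hk1
      have ihk := ih hk.le
      set K : Fin n := ⟨k, hk⟩ with hK_def
      set p : ℝ := ∫ ω, X K ω ∂μ with hp_def
      have hp0 : 0 ≤ p := integral_nonneg fun ω => by rcases h01 K ω with h | h <;> simp [h]
      have hpr : p ≤ r := hE K
      set A : (Fin n → Bool) → ℝ :=
        fun v => G k v * Real.exp (-((Real.exp t - 1) * (r * W K v))) with hA_def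
      set g1 : (Fin n → Bool) → ℝ := fun v => A v * Real.exp (t * W K v) with hg1_def
      have hKnot : K ∉ Finset.univ.filter (fun i : Fin n => (i:ℕ) < k) := by
        simp [hK_def]
      have hfil : Finset.univ.filter (fun i : Fin n => (i:ℕ) < k + 1) =
          insert K (Finset.univ.filter fun i : Fin n => (i:ℕ) < k) := by
        ext i
        simp [Nat.lt_succ_iff_lt_or_eq, hK_def, Fin.ext_iff, or_comm]
        exact Nat.le_iff_lt_or_eq.trans or_comm
      have hsplit : ∀ v, G (k+1) v = A v * Real.exp (t * (W K v * (if v K then 1 else 0))) := by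
        intro v
        simp only [hG_def, hA_def, hfil, Finset.sum_insert hKnot, ← Real.exp_add]
        congr 1
        ring
      have hdepk : ∀ (v v' : Fin n → Bool), (∀ j : Fin n, (j:ℕ) < k → v j = v' j) →
          W K v = W K v' := by
        intro v v' h
        exact hWdep K v v' fun j hj => h j hj
      have hAdep : ∀ (v v' : Fin n → Bool), (∀ j : Fin n, (j:ℕ) < k → v j = v' j) →
          A v = A v' := by
        intro v v' h
        simp only [hA_def]
        rw [hGdep k v v' h, hdepk v v' h]
      have hg1dep : ∀ (v v' : Fin n → Bool), (∀ j : Fin n, (j:ℕ) < k → v j = v' j) →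
          g1 v = g1 v' := by
        intro v v' h
        simp only [hg1_def]
        rw [hAdep v v' h, hdepk v v' h]
      -- pointwise decomposition
      have hpt : (fun ω => G (k+1) (V ω)) =
          fun ω => g1 (V ω) * X K ω + (A (V ω) - A (V ω) * X K ω) := by
        funext ω
        rw [hsplit]
        rcases h01 K ω with h | h
        · have hv : V ω K = false := by simp [hV_def, h]
          simp [h, hv]
        · have hv : V ω K = true := by simp [hV_def, h]
          simp [h, hv, hg1_def]
      have hint1 : Integrable (fun ω => g1 (V ω) * X K ω) μ := by
        have h := (hGint g1).bdd_mul (hmeas K).aestronglyMeasurable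
          (c := 1) (ae_of_all _ fun ω => by rcases h01 K ω with h | h <;> simp [h])
        exact h.congr (ae_of_all _ fun ω => mul_comm _ _)
      have hint2 : Integrable (fun ω => A (V ω) * X K ω) μ := by
        have h := (hGint A).bdd_mul (hmeas K).aestronglyMeasurable
          (c := 1) (ae_of_all _ fun ω => by rcases h01 K ω with h | h <;> simp [h])
        exact h.congr (ae_of_all _ fun ω => mul_comm _ _)
      have hstep : ∫ ω, G (k+1) (V ω) ∂μ =
          ∫ ω, A (V ω) * (1 + p * (Real.exp (t * W K (V ω)) - 1)) ∂μ := by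
        have hint3 : Integrable (fun ω => A (V ω) - A (V ω) * X K ω) μ := (hGint A).sub hint2
        have hint4 : Integrable (fun ω => p * (g1 (V ω) - A (V ω))) μ :=
          ((hGint g1).sub (hGint A)).const_mul p
        rw [hpt]
        rw [integral_add hint1 hint3, integral_sub (hGint A) hint2,
          key k hk g1 hg1dep, key k hk A hAdep]
        have hrhs : (fun ω => A (V ω) * (1 + p * (Real.exp (t * W K (V ω)) - 1))) =
            fun ω => A (V ω) + p * (g1 (V ω) - A (V ω)) := by
          funext ω
          simp only [hg1_def]
          ring
        rw [hrhs, integral_add (hGint A) hint4,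
          integral_const_mul, integral_sub (hGint g1) (hGint A)]
        ring
      -- pointwise bound
      have hbound : ∀ v : Fin n → Bool,
          A v * (1 + p * (Real.exp (t * W K v) - 1)) ≤ G k v := by
        intro v
        obtain ⟨hW0, hW1⟩ := hW01 K v
        set c : ℝ := (Real.exp t - 1) * (r * W K v) with hc_def
        have hconv : Real.exp (t * W K v) ≤ W K v * Real.exp t + (1 - W K v) := by
          have h := convexOn_exp.2 (Set.mem_univ t) (Set.mem_univ (0:ℝ)) hW0
            (by linarith : (0:ℝ) ≤ 1 - W K v) (by ring)
          simpa [mul_comm] using h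
        have he0 : 0 ≤ Real.exp (t * W K v) - 1 := by
          have h1 : (1:ℝ) ≤ Real.exp (t * W K v) :=
            Real.one_le_exp (mul_nonneg ht0.le hW0)
          linarith
        have h1 : p * (Real.exp (t * W K v) - 1) ≤ c := by
          have e1 : Real.exp (t * W K v) - 1 ≤ W K v * (Real.exp t - 1) := by nlinarith
          calc p * (Real.exp (t * W K v) - 1) ≤ r * (Real.exp (t * W K v) - 1) :=
                mul_le_mul_of_nonneg_right hpr he0
            _ ≤ r * (W K v * (Real.exp t - 1)) := mul_le_mul_of_nonneg_left e1 hr0.le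
            _ = c := by rw [hc_def]; ring
        have h2 : 1 + p * (Real.exp (t * W K v) - 1) ≤ Real.exp c := by
          have := Real.add_one_le_exp c
          linarith
        have h3 : Real.exp (-c) * (1 + p * (Real.exp (t * W K v) - 1)) ≤ 1 := by
          calc Real.exp (-c) * (1 + p * (Real.exp (t * W K v) - 1)) ≤
              Real.exp (-c) * Real.exp c :=
                mul_le_mul_of_nonneg_left h2 (Real.exp_pos _).le
            _ = 1 := by rw [← Real.exp_add]; simp
        calc A v * (1 + p * (Real.exp (t * W K v) - 1)) =
            G k v * (Real.exp (-c) * (1 + p * (Real.exp (t * W K v) - 1))) := by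
              simp only [hA_def, hc_def]; ring
          _ ≤ G k v * 1 := mul_le_mul_of_nonneg_left h3 (Real.exp_pos _).le
          _ = G k v := mul_one _
      have hmono : ∫ ω, A (V ω) * (1 + p * (Real.exp (t * W K (V ω)) - 1)) ∂μ ≤
          ∫ ω, G k (V ω) ∂μ := by
        refine integral_mono (hGint fun v => A v * (1 + p * (Real.exp (t * W K v) - 1)))
          (hGint (G k)) fun ω => hbound (V ω)
      calc ∫ ω, G (k+1) (V ω) ∂μ
          = ∫ ω, A (V ω) * (1 + p * (Real.exp (t * W K (V ω)) - 1)) ∂μ := hstep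
        _ ≤ ∫ ω, G k (V ω) ∂μ := hmono
        _ ≤ Real.exp ((Real.exp t - 1) * μ₀) := ihk
  -- identify G n with exp (t * S)
  have hfiln : Finset.univ.filter (fun i : Fin n => (i:ℕ) < n) = Finset.univ := by
    refine Finset.filter_true_of_mem fun i _ => i.isLt
  have hGn : ∀ ω, G n (V ω) =
      Real.exp (t * ∑ i, w i (fun j => X j ω) * X i ω) := by
    intro ω
    have hx : (fun j => X j ω) = b (V ω) := funext fun j => hXV ω j
    have hSsum : ∑ i, W i (V ω) = μ₀ / r := by
      simpa [hW_def] using hsum (b (V ω)) (hb01 (V ω))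
    have hterm : ∑ i, W i (V ω) * (if V ω i then (1:ℝ) else 0) =
        ∑ i, w i (fun j => X j ω) * X i ω := by
      refine Finset.sum_congr rfl fun i _ => ?_
      rw [hx, hXV ω i]
    simp only [hG_def, hfiln, hterm, hSsum]
    rw [show μ₀ - r * (μ₀ / r) = 0 by field_simp; ring, mul_zero, add_zero]
  have hST : ∫ ω, Real.exp (t * ∑ i, w i (fun j => X j ω) * X i ω) ∂μ ≤
      Real.exp ((Real.exp t - 1) * μ₀) := by
    have h := main n le_rfl
    simpa only [hGn] using h
  -- Markov's inequality
  set f : Ω → ℝ := fun ω => Real.exp (t * ∑ i, w i (fun j => X j ω) * X i ω) with hf_def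
  have hfint : Integrable f μ := by
    have : f = fun ω => G n (V ω) := funext fun ω => (hGn ω).symm
    rw [this]; exact hGint _
  set ε : ℝ := Real.exp (t * ((1 + δ) * μ₀)) with hε_def
  have hseteq : {ω | (1 + δ) * μ₀ ≤ ∑ i, w i (fun j => X j ω) * X i ω} = {ω | ε ≤ f ω} := by
    ext ω
    simp only [Set.mem_setOf_eq, hε_def, hf_def, Real.exp_le_exp]
    exact (mul_le_mul_iff_right₀ ht0).symm
  have hmark := mul_meas_ge_le_integral_of_nonneg
    (ae_of_all μ fun ω => (Real.exp_pos _).le) hfint ε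
  rw [hseteq]
  have hμfin : μ {ω | ε ≤ f ω} ≠ ⊤ := measure_ne_top μ _
  have htoR : (μ {ω | ε ≤ f ω}).toReal ≤ Real.exp ((Real.exp t - 1) * μ₀) / ε := by
    rw [le_div_iff₀ (Real.exp_pos _)]
    calc (μ {ω | ε ≤ f ω}).toReal * ε = ε * (μ {ω | ε ≤ f ω}).toReal := mul_comm _ _
      _ ≤ ∫ ω, f ω ∂μ := hmark
      _ ≤ Real.exp ((Real.exp t - 1) * μ₀) := hST
  have hfinal : Real.exp ((Real.exp t - 1) * μ₀) / ε =
      (Real.exp δ / (1 + δ) ^ (1 + δ)) ^ μ₀ := by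
    have hbase : (0:ℝ) < Real.exp δ / (1 + δ) ^ (1 + δ) := by positivity
    rw [Real.rpow_def_of_pos hbase, Real.log_div (Real.exp_pos δ).ne' (by positivity),
      Real.log_exp, Real.log_rpow h1δ, hε_def, ← Real.exp_sub, hexp_t, ht_def]
    congr 1
    ring
  calc μ {ω | ε ≤ f ω} = ENNReal.ofReal (μ {ω | ε ≤ f ω}).toReal :=
        (ENNReal.ofReal_toReal hμfin).symm
    _ ≤ ENNReal.ofReal (Real.exp ((Real.exp t - 1) * μ₀) / ε) := ENNReal.ofReal_le_ofReal htoR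
    _ = ENNReal.ofReal ((Real.exp δ / (1 + δ) ^ (1 + δ)) ^ μ₀) := by rw [hfinal]
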